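/- Let X be a Banach space and M, N closed subspaces of X. If there exists a bounded linear projection P : X → X with range N such that the restriction of P to M is an isomorphism (bounded bijection with bounded inverse) from M onto N, then M and N have a common complement in X, namely ker P. -/

import Mathlib

theorem stmt_7 {X : Type*} [NormedAddCommGroup X] [NormedSpace ℝ X] [CompleteSpace X]
    (M N : Submodule ℝ X) (hM : IsClosed (M : Set X)) (hN : IsClosed (N : Set X))
    (P : X →L[ℝ] X) (hP : P ∘L P = P) (hPN : LinearMap.range (P : X →ₗ[ℝ] X) = N)
    (e : M ≃L[ℝ] N) (he : ∀ x : M, (e x : X) = P x) :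
    IsClosed ((LinearMap.ker (P : X →ₗ[ℝ] X) : Submodule ℝ X) : Set X) ∧
      M ⊓ LinearMap.ker (P : X →ₗ[ℝ] X) = ⊥ ∧ M ⊔ LinearMap.ker (P : X →ₗ[ℝ] X) = ⊤ ∧
      N ⊓ LinearMap.ker (P : X →ₗ[ℝ] X) = ⊥ ∧ N ⊔ LinearMap.ker (P : X →ₗ[ℝ] X) = ⊤ := by
  have hPP : ∀ x, P (P x) = P x := fun x => by
    have := congrArg (fun f : X →L[ℝ] X => f x) hP; simpa using this
  refine ⟨?_, ?_, ?_, ?_, ?_⟩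
  · exact isClosed_eq (map_continuous P) continuous_zero
  · -- M ⊓ ker P = ⊥
    rw [Submodule.eq_bot_iff]
    rintro x ⟨hxM, hxK⟩
    have h0 : (e ⟨x, hxM⟩ : X) = 0 := by rw [he ⟨x, hxM⟩]; exact hxK
    have : e ⟨x, hxM⟩ = 0 := Subtype.ext h0
    have : (⟨x, hxM⟩ : M) = 0 := e.injective (by simpa using this)
    simpa using congrArg Subtype.val this
  · -- M ⊔ ker P = ⊤
    rw [Submodule.eq_top_iff']
    intro x
    have hPx : P x ∈ N := hPN ▸ LinearMap.mem_range_self (P : X →ₗ[ℝ] X) x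
    set m : M := e.symm ⟨P x, hPx⟩
    have hm : P (m : X) = P x := by
      have := he m
      rw [e.apply_symm_apply] at this
      exact this.symm
    have hker : x - (m : X) ∈ LinearMap.ker (P : X →ₗ[ℝ] X) := by
      simp [LinearMap.mem_ker, map_sub, hm, hPP]
    have : x = (m : X) + (x - (m : X)) := by abel
    rw [this]
    exact Submodule.add_mem_sup m.2 hker
  · -- N ⊓ ker P = ⊥
    rw [Submodule.eq_bot_iff]
    rintro x ⟨hxN, hxK⟩
    obtain ⟨y, rfl⟩ := hPN ▸ hxN
    have : P (P y) = 0 := hxK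
    rwa [hPP] at this
  · -- N ⊔ ker P = ⊤
    rw [Submodule.eq_top_iff']
    intro x
    have hPx : P x ∈ N := hPN ▸ LinearMap.mem_range_self (P : X →ₗ[ℝ] X) x
    have hker : x - P x ∈ LinearMap.ker (P : X →ₗ[ℝ] X) := by
      simp [LinearMap.mem_ker, map_sub, hPP]
    have : x = P x + (x - P x) := by abel
    rw [this]
    exact Submodule.add_mem_sup hPx hker
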